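/- The exponential formula: for any h: ℕ → ℝ, exp(Σ_{k≥1} h(k) t^k/k!) = Σ_{n≥0} (t^n/n!)·Σ_{α ∈ Π_n} Π_{blocks α_k} h(|α_k|) as formal power series in t, where the n=0 term equals 1. -/

import Mathlib

open Nat Finset

namespace ExpFormulaAux

variable {n m : ℕ}

/-- cardinality of the fiber of `g` over `i` -/
def fc (g : Fin n → Fin m) (i : Fin m) : ℕ := (univ.filter fun x => g x = i).card

lemma card_subtype_fc (g : Fin n → Fin m) (i : Fin m) :
    Fintype.card {x // g x = i} = fc g i := Fintype.card_subtype _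

lemma sum_fc (g : Fin n → Fin m) : ∑ i, fc g i = n := by
  have := Finset.card_eq_sum_card_fiberwise (f := g) (s := univ) (t := univ)
    (fun x _ => mem_univ _)
  simpa [fc] using this.symm

lemma fc_comp_perm (g : Fin n → Fin m) (σ : Equiv.Perm (Fin n)) (i : Fin m) :
    fc (g ∘ σ) i = fc g i := by
  rw [← card_subtype_fc, ← card_subtype_fc]
  exact Fintype.card_congr (Equiv.subtypeEquiv σ fun x => Iff.rfl)

lemma permCount (g₁ g₂ : Fin n → Fin m) (hfc : ∀ i, fc g₁ i = fc g₂ i) :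
    (univ.filter fun σ : Equiv.Perm (Fin n) => g₁ ∘ σ = g₂).card = ∏ i, (fc g₂ i)! := by
  rw [← Fintype.card_subtype]
  have E : {σ : Equiv.Perm (Fin n) // g₁ ∘ ⇑σ = g₂} ≃
      ∀ i, ({x // g₂ x = i} ≃ {x // g₁ x = i}) :=
    { toFun := fun σ i => Equiv.subtypeEquiv σ.1 fun x => by
        rw [← congrFun σ.2 x]; rfl
      invFun := fun F => ⟨Equiv.ofFiberEquiv F, funext fun x => Equiv.ofFiberEquiv_map F x⟩
      left_inv := fun σ => Subtype.ext (Equiv.ext fun x => rfl)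
      right_inv := fun F => funext fun i => Equiv.ext fun a => Subtype.ext (by
        obtain ⟨x, rfl⟩ := a
        rfl) }
  rw [Fintype.card_congr E, Fintype.card_pi]
  refine Finset.prod_congr rfl fun i _ => ?_
  rw [Fintype.card_equiv (Fintype.equivOfCardEq (by rw [card_subtype_fc, card_subtype_fc, hfc]))]
  rw [card_subtype_fc]

/-- the fiber of `Sigma.fst` over `i` -/
def sigmaFstFiber {ι : Type*} (β : ι → Type*) (i : ι) :
    {p : Σ j, β j // p.1 = i} ≃ β i where
  toFun p := (congrArg β p.2) ▸ p.1.2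
  invFun b := ⟨⟨i, b⟩, rfl⟩
  left_inv := fun ⟨⟨j, b⟩, hj⟩ => by subst hj; rfl
  right_inv b := rfl

lemma exists_fibers (d : Fin m → ℕ) (hd : ∑ i, d i = n) :
    ∃ c : Fin n → Fin m, ∀ i, fc c i = d i := by
  have hcard : Fintype.card (Σ i : Fin m, Fin (d i)) = n := by
    simp [Fintype.card_sigma, hd]
  let e := Fintype.equivFinOfCardEq hcard
  refine ⟨fun x => (e.symm x).1, fun i => ?_⟩
  rw [show d i = Fintype.card (Fin (d i)) from (Fintype.card_fin _).symm,
    ← card_subtype_fc]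
  exact Fintype.card_congr
    ((Equiv.subtypeEquiv e.symm fun x => Iff.rfl).trans (sigmaFstFiber _ i))

lemma cardWithFibers (d : Fin m → ℕ) (hd : ∑ i, d i = n) :
    (univ.filter fun g : Fin n → Fin m => ∀ i, fc g i = d i).card * ∏ i, (d i)! = n ! := by
  classical
  obtain ⟨c, hc⟩ := exists_fibers d hd
  have hmaps : ∀ σ : Equiv.Perm (Fin n), σ ∈ (univ : Finset (Equiv.Perm (Fin n))) →
      c ∘ σ ∈ (univ.filter fun g : Fin n → Fin m => ∀ i, fc g i = d i) := by
    intro σ _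
    simp only [mem_filter, mem_univ, true_and]
    intro i
    rw [fc_comp_perm, hc]
  have h1 := Finset.card_eq_sum_card_fiberwise hmaps
  have h2 : ∀ g ∈ (univ.filter fun g : Fin n → Fin m => ∀ i, fc g i = d i),
      ((univ : Finset (Equiv.Perm (Fin n))).filter fun σ : Equiv.Perm (Fin n) => c ∘ ⇑σ = g).card
        = ∏ i, (d i)! := by
    intro g hg
    simp only [mem_filter, mem_univ, true_and] at hg
    rw [permCount c g (fun i => by rw [hc, hg])]
    exact Finset.prod_congr rfl fun i _ => by rw [hg]
  rw [Finset.sum_congr rfl h2, Finset.sum_const, smul_eq_mul] at h1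
  rw [← h1]
  simp [Finset.card_univ, Fintype.card_perm, Fintype.card_fin]


/-- the weight of a block size -/
def w (h : ℕ → ℝ) (k : ℕ) : ℝ := if k = 0 then 0 else h k

/-- total weight of all functions `Fin n → Fin m` -/
def S (h : ℕ → ℝ) (n m : ℕ) : ℝ := ∑ g : Fin n → Fin m, ∏ i, w h (fc g i)

lemma fact_mul_v (h : ℕ → ℝ) (k : ℕ) :
    ((k ! : ℝ)) * (if k = 0 then (0 : ℝ) else h k / (k ! : ℝ)) = w h k := by
  by_cases hk : k = 0
  · simp [w, hk]
  · have : ((k ! : ℝ)) ≠ 0 := Nat.cast_ne_zero.2 (Nat.factorial_ne_zero k)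
    simp only [w, hk, if_false]
    field_simp

lemma coeff_pow_eq (h : ℕ → ℝ) (n m : ℕ) :
    PowerSeries.coeff (R := ℝ) n
        ((PowerSeries.mk fun k => if k = 0 then (0 : ℝ) else h k / (k ! : ℝ)) ^ m)
      = ((n ! : ℝ))⁻¹ * S h n m := by
  classical
  set v : ℕ → ℝ := fun k => if k = 0 then (0 : ℝ) else h k / (k ! : ℝ) with hv
  have hpow : (PowerSeries.mk v) ^ m = ∏ _i : Fin m, PowerSeries.mk v := by
    rw [Finset.prod_const, Finset.card_univ, Fintype.card_fin]
  rw [hpow, PowerSeries.coeff_prod, eq_inv_mul_iff_mul_eq₀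
    (Nat.cast_ne_zero.2 (Nat.factorial_ne_zero n)), Finset.mul_sum]
  -- the grouping map
  have hmaps : ∀ g : Fin n → Fin m, g ∈ (univ : Finset (Fin n → Fin m)) →
      Finsupp.equivFunOnFinite.symm (fc g) ∈ finsuppAntidiag (univ : Finset (Fin m)) n := by
    intro g _
    rw [mem_finsuppAntidiag]
    refine ⟨?_, subset_univ _⟩
    simpa using sum_fc g
  rw [S, ← Finset.sum_fiberwise_of_maps_to hmaps]
  refine Finset.sum_congr rfl fun l hl => ?_
  have hsum : ∑ i, l i = n := by
    rw [mem_finsuppAntidiag] at hl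
    exact hl.1
  have hfilter : (univ : Finset (Fin n → Fin m)).filter
        (fun g => Finsupp.equivFunOnFinite.symm (fc g) = l)
      = (univ : Finset (Fin n → Fin m)).filter (fun g => ∀ i, fc g i = l i) := by
    refine Finset.filter_congr fun g _ => ?_
    rw [Equiv.symm_apply_eq]
    constructor
    · intro hgl i; rw [hgl]; rfl
    · intro hgl; funext i; exact hgl i
  have hterm : ∀ g ∈ (univ : Finset (Fin n → Fin m)).filter (fun g => ∀ i, fc g i = l i),
      ∏ i, w h (fc g i) = ∏ i, w h (l i) := by
    intro g hg
    simp only [mem_filter, mem_univ, true_and] at hg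
    exact Finset.prod_congr rfl fun i _ => by rw [hg]
  rw [hfilter, Finset.sum_congr rfl hterm, Finset.sum_const, nsmul_eq_mul]
  have hcount := cardWithFibers (n := n) (m := m) (fun i => l i) hsum
  have hcastR : ((((univ : Finset (Fin n → Fin m)).filter
        (fun g => ∀ i, fc g i = l i)).card : ℝ)) * ∏ i, ((l i)! : ℝ)
      = (n ! : ℝ) := by
    exact_mod_cast congrArg (fun x : ℕ => (x : ℝ)) hcount
  calc ((n ! : ℝ)) * ∏ i ∈ univ, (PowerSeries.coeff (R := ℝ) (l i)) (PowerSeries.mk v)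
      = ((((univ : Finset (Fin n → Fin m)).filter
          (fun g => ∀ i, fc g i = l i)).card : ℝ)) *
          ∏ i, (((l i)! : ℝ) * v (l i)) := by
        rw [Finset.prod_mul_distrib, ← mul_assoc, hcastR]
        refine congrArg _ (Finset.prod_congr rfl fun i _ => ?_)
        rw [PowerSeries.coeff_mk]
    _ = _ := by
        refine congrArg _ (Finset.prod_congr rfl fun i _ => ?_)
        exact fact_mul_v h (l i)


instance kerDec (g : Fin n → Fin m) : DecidableRel (Setoid.ker g).r :=
  fun a b => inferInstanceAs (Decidable (g a = g b))

/-- the kernel partition of a function -/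
def kerPart (g : Fin n → Fin m) : Finpartition (univ : Finset (Fin n)) :=
  Finpartition.ofSetoid (Setoid.ker g)

lemma kerPart_parts (g : Fin n → Fin m) :
    (kerPart g).parts = univ.image fun a => univ.filter fun b => g b = g a := by
  ext t
  simp only [kerPart, Finpartition.ofSetoid, Finpartition.ofSetSetoid_parts, mem_image, mem_univ, true_and]
  constructor
  · rintro ⟨a, rfl⟩
    exact ⟨a, by ext b; simp [Setoid.ker, Function.onFun, eq_comm]⟩
  · rintro ⟨a, rfl⟩
    exact ⟨a, by ext b; simp [Setoid.ker, Function.onFun, eq_comm]⟩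

lemma kerPart_parts_of_surj {g : Fin n → Fin m} (hg : Function.Surjective g) :
    (kerPart g).parts = univ.image fun i => univ.filter fun b => g b = i := by
  rw [kerPart_parts]
  have h1 : (univ.image fun a => univ.filter fun b : Fin n => g b = g a)
      = (univ.image g).image fun i => univ.filter fun b => g b = i := by
    rw [Finset.image_image]; rfl
  rw [h1]
  congr 1
  exact Finset.eq_univ_of_forall fun i => Finset.mem_image.2
    ⟨(hg i).choose, mem_univ _, (hg i).choose_spec⟩

lemma fiber_inj {g : Fin n → Fin m} (hg : Function.Surjective g) :
    Function.Injective fun i : Fin m => univ.filter fun b : Fin n => g b = i := by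
  intro i j hij
  have hij' : (univ.filter fun b : Fin n => g b = i)
      = univ.filter fun b : Fin n => g b = j := hij
  obtain ⟨x, hx⟩ := hg i
  have hxj : x ∈ univ.filter fun b : Fin n => g b = j := by
    rw [← hij']; simp [hx]
  simp only [mem_filter, mem_univ, true_and] at hxj
  rw [← hx, hxj]

lemma prod_parts_of_surj (h : ℕ → ℝ) {g : Fin n → Fin m} (hg : Function.Surjective g) :
    ∏ b ∈ (kerPart g).parts, h b.card = ∏ i : Fin m, w h (fc g i) := by
  rw [kerPart_parts_of_surj hg,
    Finset.prod_image fun i _ j _ hij => fiber_inj hg hij]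
  refine Finset.prod_congr rfl fun i _ => ?_
  have hne : fc g i ≠ 0 := by
    obtain ⟨x, hx⟩ := hg i
    refine Finset.card_ne_zero_of_mem (a := x) ?_
    simp [hx]
  simp only [w, if_neg hne]; rfl

lemma prod_w_eq_zero {g : Fin n → Fin m} (h : ℕ → ℝ) (hg : ¬ Function.Surjective g) :
    ∏ i : Fin m, w h (fc g i) = 0 := by
  rw [Function.Surjective] at hg
  push_neg at hg
  obtain ⟨i, hi⟩ := hg
  refine Finset.prod_eq_zero (mem_univ i) ?_
  have : fc g i = 0 := by
    rw [fc, Finset.card_eq_zero, Finset.filter_eq_empty_iff]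
    intro x _
    exact hi x
  simp [w, this]

lemma image_part (α : Finpartition (univ : Finset (Fin n))) :
    univ.image α.part = α.parts := by
  ext t
  simp only [mem_image, mem_univ, true_and]
  constructor
  · rintro ⟨a, rfl⟩
    exact α.part_mem.2 (mem_univ a)
  · intro ht
    obtain ⟨x, -, hx⟩ := α.part_surjOn (Finset.mem_coe.2 ht)
    exact ⟨x, hx⟩

lemma card_ker_eq (α : Finpartition (univ : Finset (Fin n))) (m : ℕ) :
    ((univ : Finset (Fin n → Fin m)).filter
      fun g => kerPart g = α ∧ Function.Surjective g).card
    = if α.parts.card = m then m ! else 0 := by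
  classical
  split_ifs with hm
  · -- bijection with equivalences `α.parts ≃ Fin m`
    set Ψ : (↥α.parts ≃ Fin m) → (Fin n → Fin m) :=
      fun e x => e ⟨α.part x, α.part_mem.2 (mem_univ x)⟩ with hΨ
    have hcard : Fintype.card ↥α.parts = m := by rw [Fintype.card_coe]; exact hm
    have key : ((univ : Finset (↥α.parts ≃ Fin m))).card
        = ((univ : Finset (Fin n → Fin m)).filter
            fun g => kerPart g = α ∧ Function.Surjective g).card := by
      refine Finset.card_bij (fun e _ => Ψ e) ?_ ?_ ?_
      · intro e _
        have hsurj : Function.Surjective (Ψ e) := by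
          intro i
          obtain ⟨x, hx⟩ := α.nonempty_of_mem_parts (e.symm i).2
          refine ⟨x, ?_⟩
          have hb : (⟨α.part x, α.part_mem.2 (mem_univ x)⟩ : ↥α.parts) = e.symm i :=
            Subtype.ext (α.part_eq_of_mem (e.symm i).2 hx)
          show e _ = i
          rw [hb, Equiv.apply_symm_apply]
        simp only [mem_filter, mem_univ, true_and]
        refine ⟨?_, hsurj⟩
        apply Finpartition.ext
        rw [kerPart_parts]
        have hfib : ∀ a : Fin n,
            (univ.filter fun b => Ψ e b = Ψ e a) = α.part a := by
          intro a
          ext b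
          simp only [mem_filter, mem_univ, true_and, hΨ]
          rw [Equiv.apply_eq_iff_eq, Subtype.ext_iff]
          exact α.mem_part_iff_part_eq_part (mem_univ b) (mem_univ a) |>.symm
        calc (univ.image fun a => univ.filter fun b => Ψ e b = Ψ e a)
            = univ.image α.part := Finset.image_congr fun a _ => hfib a
          _ = α.parts := image_part α
      · intro e₁ _ e₂ _ hee
        have hee' : Ψ e₁ = Ψ e₂ := hee
        refine Equiv.ext fun b => ?_
        obtain ⟨x, hx⟩ := α.nonempty_of_mem_parts b.2
        have hb : (⟨α.part x, α.part_mem.2 (mem_univ x)⟩ : ↥α.parts) = b :=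
          Subtype.ext (α.part_eq_of_mem b.2 hx)
        calc e₁ b = Ψ e₁ x := by rw [hΨ]; simp [hb]
          _ = Ψ e₂ x := by rw [hee']
          _ = e₂ b := by rw [hΨ]; simp [hb]
      · intro g hg
        simp only [mem_filter, mem_univ, true_and] at hg
        obtain ⟨hker, hsurj⟩ := hg
        have hparts : α.parts = univ.image fun i => univ.filter fun b => g b = i := by
          rw [← hker, kerPart_parts_of_surj hsurj]
        set F : Fin m → ↥α.parts := fun i =>
          ⟨univ.filter fun b => g b = i, by
            rw [hparts]; exact Finset.mem_image_of_mem _ (mem_univ i)⟩ with hF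
        have hFbij : Function.Bijective F := by
          constructor
          · intro i j hij
            exact fiber_inj hsurj (congrArg Subtype.val hij)
          · rintro ⟨t, ht⟩
            rw [hparts] at ht
            obtain ⟨i, -, hi⟩ := Finset.mem_image.1 ht
            exact ⟨i, Subtype.ext hi⟩
        refine ⟨(Equiv.ofBijective F hFbij).symm, mem_univ _, ?_⟩
        funext x
        show (Equiv.ofBijective F hFbij).symm _ = g x
        rw [Equiv.symm_apply_eq, Equiv.ofBijective_apply]
        refine Subtype.ext ?_
        show α.part x = univ.filter fun b => g b = g x
        refine α.part_eq_of_mem ?_ ?_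
        · rw [hparts]; exact Finset.mem_image_of_mem _ (mem_univ (g x))
        · simp
    rw [← key, Finset.card_univ, Fintype.card_equiv (Fintype.equivFinOfCardEq hcard),
      hcard]
  · rw [Finset.card_eq_zero, Finset.filter_eq_empty_iff]
    intro g _ hgp
    obtain ⟨hker, hsurj⟩ := hgp
    apply hm
    rw [← hker, kerPart_parts_of_surj hsurj,
      Finset.card_image_of_injective _ (fiber_inj hsurj), Finset.card_univ,
      Fintype.card_fin]

lemma S_eq (h : ℕ → ℝ) (n m : ℕ) :
    S h n m = ∑ α : Finpartition (univ : Finset (Fin n)),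
      (if α.parts.card = m then (m ! : ℝ) else 0) * ∏ b ∈ α.parts, h b.card := by
  classical
  rw [S, ← Finset.sum_fiberwise_of_maps_to
    (g := fun g : Fin n → Fin m => kerPart g) (t := univ) (fun g _ => mem_univ _)]
  refine Finset.sum_congr rfl fun α _ => ?_
  have hstep : ∑ g ∈ (univ : Finset (Fin n → Fin m)).filter (fun g => kerPart g = α),
        ∏ i, w h (fc g i)
      = ∑ g ∈ (univ : Finset (Fin n → Fin m)).filter
          (fun g => kerPart g = α ∧ Function.Surjective g), ∏ i, w h (fc g i) := by
    rw [← Finset.filter_filter]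
    refine (Finset.sum_filter_of_ne ?_).symm
    intro g _ hne
    by_contra hsurj
    exact hne (prod_w_eq_zero h hsurj)
  rw [hstep]
  have hterm : ∀ g ∈ (univ : Finset (Fin n → Fin m)).filter
      (fun g => kerPart g = α ∧ Function.Surjective g),
      ∏ i, w h (fc g i) = ∏ b ∈ α.parts, h b.card := by
    intro g hg
    simp only [mem_filter, mem_univ, true_and] at hg
    rw [← hg.1, prod_parts_of_surj h hg.2]
  rw [Finset.sum_congr rfl hterm, Finset.sum_const, nsmul_eq_mul, card_ker_eq]
  split_ifs with hm <;> simp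

end ExpFormulaAux

/-- **The exponential formula.**
For any `h : ℕ → ℝ`, `exp(Σ_{k≥1} h(k) t^k/k!) = Σ_{n≥0} (t^n/n!) Σ_{α∈Π_n} Π_{blocks} h(|block|)`
as formal power series in `t` (the `n = 0` term being `1`).  Since the series
`f = Σ_{k≥1} h(k)t^k/k!` has zero constant term, `exp(f)` is the formal power series whose
`n`-th coefficient is that of `Σ_{m=0}^{n} f^m/m!`; the right-hand side's `n`-th coefficient
is `(1/n!)·Σ_{α∈Π_n} Π_{blocks b of α} h(|b|)` (which is `1` for `n = 0`). -/
theorem exponential_formula (h : ℕ → ℝ) (n : ℕ) :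
    PowerSeries.coeff (R := ℝ) n
        (∑ m ∈ Finset.range (n + 1),
          PowerSeries.C (R := ℝ) ((m ! : ℝ))⁻¹ *
            (PowerSeries.mk (fun k => if k = 0 then (0 : ℝ) else h k / (k ! : ℝ))) ^ m)
      = ((n ! : ℝ))⁻¹ *
          ∑ α : Finpartition (Finset.univ : Finset (Fin n)),
            ∏ b ∈ α.parts, h b.card := by
  classical
  rw [map_sum]
  have hterm : ∀ m ∈ Finset.range (n + 1),
      PowerSeries.coeff (R := ℝ) n (PowerSeries.C (R := ℝ) ((m ! : ℝ))⁻¹ *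
          (PowerSeries.mk (fun k => if k = 0 then (0 : ℝ) else h k / (k ! : ℝ))) ^ m)
        = ((n ! : ℝ))⁻¹ * (((m ! : ℝ))⁻¹ * ExpFormulaAux.S h n m) := by
    intro m _
    rw [PowerSeries.coeff_C_mul, ExpFormulaAux.coeff_pow_eq]
    ring
  rw [Finset.sum_congr rfl hterm, ← Finset.mul_sum]
  congr 1
  calc ∑ m ∈ Finset.range (n + 1), ((m ! : ℝ))⁻¹ * ExpFormulaAux.S h n m
      = ∑ m ∈ Finset.range (n + 1), ∑ α : Finpartition (Finset.univ : Finset (Fin n)),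
          ((m ! : ℝ))⁻¹ * ((if α.parts.card = m then (m ! : ℝ) else 0) *
            ∏ b ∈ α.parts, h b.card) := by
        refine Finset.sum_congr rfl fun m _ => ?_
        rw [ExpFormulaAux.S_eq, Finset.mul_sum]
    _ = ∑ α : Finpartition (Finset.univ : Finset (Fin n)),
          ∑ m ∈ Finset.range (n + 1),
          ((m ! : ℝ))⁻¹ * ((if α.parts.card = m then (m ! : ℝ) else 0) *
            ∏ b ∈ α.parts, h b.card) := Finset.sum_comm
    _ = ∑ α : Finpartition (Finset.univ : Finset (Fin n)), ∏ b ∈ α.parts, h b.card := by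
        refine Finset.sum_congr rfl fun α _ => ?_
        have hcard : α.parts.card ∈ Finset.range (n + 1) := by
          rw [Finset.mem_range, Nat.lt_succ_iff]
          simpa using α.card_parts_le_card
        have hsummand : ∀ m, ((m ! : ℝ))⁻¹ * ((if α.parts.card = m then (m ! : ℝ) else 0) *
              ∏ b ∈ α.parts, h b.card)
            = if α.parts.card = m then ∏ b ∈ α.parts, h b.card else 0 := by
          intro m
          split_ifs with hm
          · rw [← mul_assoc, inv_mul_cancel₀ (Nat.cast_ne_zero.2 (Nat.factorial_ne_zero m)),
              one_mul]
          · ring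
        rw [Finset.sum_congr rfl fun m _ => hsummand m, Finset.sum_ite_eq]
        simp [hcard]
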